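/- arXiv:1410.2194 — 2 statements merged into one kernel-verified Lean document; each statement's English description precedes it below -/
import Mathlib

section
/- Let M = M(G,n,m;P) be a finite completely simple semigroup, i.e., the Rees matrix semigroup without zero over a finite group G whose sandwich matrix P has all entries in G. Then M/η* is a finite nilpotent group: there exists a finite nilpotent group H and a semigroup isomorphism M/η* ≅ H. -/
/-! Common definitions: Mal'cev nilpotency, the relations η_n, η, the congruence η*,
Rees matrix semigroups (with and without zero), regularity, CS-diagonality,
the row relation ~, ideals, principal series and Rees factor isomorphisms. -/

/-- The pair `(λ_n, ρ_n)` of Mal'cev words in a monoid, with `λ₀ = x`, `ρ₀ = y`,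
`λ_{k+1} = λ_k * z (k+1) * ρ_k` and `ρ_{k+1} = ρ_k * z (k+1) * λ_k`. -/
def malcev {M : Type*} [Monoid M] (x y : M) (z : ℕ → M) : ℕ → M × M
  | 0 => (x, y)
  | k + 1 =>
      ((malcev x y z k).1 * z (k + 1) * (malcev x y z k).2,
       (malcev x y z k).2 * z (k + 1) * (malcev x y z k).1)

/-- A semigroup `S` is Mal'cev nilpotent if for some positive `n`,
`λ_n(a,b,c₁,…,c_n) = ρ_n(a,b,c₁,…,c_n)` for all `a b ∈ S` and all `cᵢ ∈ S¹`,
where `S¹ = WithOne S`. -/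
def MalcevNilpotent (S : Type*) [Semigroup S] : Prop :=
  ∃ n : ℕ, 0 < n ∧ ∀ (a b : S) (z : ℕ → WithOne S),
    (malcev (a : WithOne S) (b : WithOne S) z n).1 =
    (malcev (a : WithOne S) (b : WithOne S) z n).2

/-- The relation `η_n` on a semigroup `S`: `η₁` is the diagonal, and for `n > 1`,
`x η_n y` iff there are `z₁, …, z_n ∈ S¹` with `x = λ_n(x,y,z₁,…,z_n)` and
`y = ρ_n(x,y,z₁,…,z_n)`. -/
def etaN (S : Type*) [Semigroup S] (n : ℕ) (x y : S) : Prop :=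
  (n = 1 ∧ x = y) ∨
  (1 < n ∧ ∃ z : ℕ → WithOne S,
    (x : WithOne S) = (malcev (x : WithOne S) (y : WithOne S) z n).1 ∧
    (y : WithOne S) = (malcev (x : WithOne S) (y : WithOne S) z n).2)

/-- `η`, the transitive closure of the union of the relations `η_n`, `n ≥ 1`. -/
def eta (S : Type*) [Semigroup S] : S → S → Prop :=
  Relation.TransGen (fun x y => ∃ n, 1 ≤ n ∧ etaN S n x y)

/-- `η*`, the smallest congruence on `S` containing `η`. -/
def etaStar (S : Type*) [Semigroup S] : Con S :=
  conGen (eta S)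

/-- A semigroup is an inverse semigroup if every element has exactly one inverse. -/
def IsInverseSemigroup (S : Type*) [Semigroup S] : Prop :=
  ∀ x : S, ∃! y : S, x * y * x = x ∧ y * x * y = y

/-- A semigroup is completely regular if every element lies in a subgroup:
for every `a` there is `b` with `aba = a`, `ab = ba` and `bab = b`. -/
def IsCompletelyRegular (S : Type*) [Semigroup S] : Prop :=
  ∀ a : S, ∃ b : S, a * b * a = a ∧ a * b = b * a ∧ b * a * b = b

/-- A (possibly empty) two-sided ideal of a semigroup. -/
def IsIdeal (S : Type*) [Semigroup S] (I : Set S) : Prop :=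
  ∀ s : S, ∀ x ∈ I, s * x ∈ I ∧ x * s ∈ I

/-- The Rees matrix semigroup `M⁰(G, n, m; P)` with zero `theta`; the sandwich
matrix entry `P j i : Option G` is `none` when the entry is `θ`. -/
inductive ReesMatrix (G : Type*) (n m : ℕ) (P : Fin m → Fin n → Option G) where
  | theta : ReesMatrix G n m P
  | elem (g : G) (i : Fin n) (j : Fin m) : ReesMatrix G n m P

namespace ReesMatrix

variable {G : Type*} [Group G] {n m : ℕ} {P : Fin m → Fin n → Option G}

/-- Multiplication: `(g;i,j)(h;k,l) = (g p_{j,k} h; i, l)` if `p_{j,k} ≠ θ`,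
and all other products are `θ`. -/
def mul : ReesMatrix G n m P → ReesMatrix G n m P → ReesMatrix G n m P
  | elem g i j, elem h k l =>
      match P j k with
      | some p => elem (g * p * h) i l
      | none => theta
  | _, _ => theta

instance : Semigroup (ReesMatrix G n m P) where
  mul := mul
  mul_assoc a b c := by
    show mul (mul a b) c = mul a (mul b c)
    rcases a with _ | ⟨g, i, j⟩ <;> rcases b with _ | ⟨h, k, l⟩ <;>
      rcases c with _ | ⟨f, r, s⟩
    all_goals try rfl
    · rcases hjk : P j k with _ | p <;> simp [mul, hjk]
    · rcases hjk : P j k with _ | p <;> rcases hlr : P l r with _ | q <;>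
        simp [mul, hjk, hlr, mul_assoc]

theorem mul_def (a b : ReesMatrix G n m P) : a * b = mul a b := rfl

instance [Finite G] : Finite (ReesMatrix G n m P) := by
  have := Fintype.ofFinite G
  exact Finite.of_surjective
    (fun x : Option (G × Fin n × Fin m) =>
      match x with
      | none => (theta : ReesMatrix G n m P)
      | some (g, i, j) => elem g i j)
    (by rintro (_ | ⟨g, i, j⟩)
        · exact ⟨none, rfl⟩
        · exact ⟨some (g, i, j), rfl⟩)

end ReesMatrix

/-- `P` is regular: every row and every column of the sandwich matrix has a
nonzero entry. -/
def IsRegularSandwich {G : Type*} {n m : ℕ} (P : Fin m → Fin n → Option G) : Prop :=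
  (∀ i : Fin n, ∃ j : Fin m, P j i ≠ none) ∧ (∀ j : Fin m, ∃ i : Fin n, P j i ≠ none)

/-- `P` is CS-diagonal: whenever `p_{r,t}`, `p_{r',t}` and `p_{r,t'}` are all
nonzero, so is `p_{r',t'}`. -/
def IsCSDiagonal {G : Type*} {n m : ℕ} (P : Fin m → Fin n → Option G) : Prop :=
  ∀ (r r' : Fin m) (t t' : Fin n),
    P r t ≠ none → P r' t ≠ none → P r t' ≠ none → P r' t' ≠ none

/-- The relation `~` on rows: `i ~ i'` iff some column `j` has `p_{j,i} ≠ θ`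
and `p_{j,i'} ≠ θ`. -/
def rowRel {G : Type*} {n m : ℕ} (P : Fin m → Fin n → Option G) (i i' : Fin n) : Prop :=
  ∃ j : Fin m, P j i ≠ none ∧ P j i' ≠ none

/-- The completely simple Rees matrix semigroup `M(G, n, m; P)` (without zero),
all sandwich entries lying in `G`. -/
inductive ReesMatrixCS (G : Type*) (n m : ℕ) (P : Fin m → Fin n → G) where
  | elem (g : G) (i : Fin n) (j : Fin m) : ReesMatrixCS G n m P

namespace ReesMatrixCS

variable {G : Type*} [Group G] {n m : ℕ} {P : Fin m → Fin n → G}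

instance : Semigroup (ReesMatrixCS G n m P) where
  mul a b := match a, b with
    | elem g i j, elem h k l => elem (g * P j k * h) i l
  mul_assoc a b c := by
    rcases a with ⟨g, i, j⟩; rcases b with ⟨h, k, l⟩; rcases c with ⟨f, r, s⟩
    show elem _ _ _ = elem _ _ _
    simp [mul_assoc]

instance [Finite G] : Finite (ReesMatrixCS G n m P) := by
  have := Fintype.ofFinite G
  exact Finite.of_surjective
    (fun x : G × Fin n × Fin m => elem x.1 x.2.1 x.2.2)
    (by rintro ⟨g, i, j⟩; exact ⟨(g, i, j), rfl⟩)

end ReesMatrixCS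

/-- A principal series of a finite semigroup `S`:
`S = C 1 ⊃ C 2 ⊃ … ⊃ C o ⊃ C (o+1) = ∅`, each `C p` an ideal of `S` with
no ideal of `S` strictly between consecutive terms. -/
structure PrincipalSeries (S : Type*) [Semigroup S] where
  o : ℕ
  ho : 1 ≤ o
  C : ℕ → Set S
  first : C 1 = Set.univ
  last : C (o + 1) = ∅
  isIdeal : ∀ p, 1 ≤ p → p ≤ o → IsIdeal S (C p)
  strict : ∀ p, 1 ≤ p → p ≤ o → C (p + 1) ⊂ C p
  max : ∀ p, 1 ≤ p → p ≤ o → ∀ I : Set S, IsIdeal S I →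
    C (p + 1) ⊆ I → I ⊆ C p → I = C (p + 1) ∨ I = C p

/-- `f` realises the Rees factor `A/B` (the Rees quotient of `A` by the ideal `B`;
if `B = ∅` the factor is `A` itself) as the Rees matrix semigroup with zero
`M⁰(H, n', m'; Q)`. -/
def IsReesFactorM0 {S : Type*} [Semigroup S] (A B : Set S)
    {H : Type*} [Group H] {n' m' : ℕ} (Q : Fin m' → Fin n' → Option H)
    (f : S → ReesMatrix H n' m' Q) : Prop :=
  (∀ x ∈ A, ∀ y ∈ A, f (x * y) = f x * f y) ∧
  ((B = ∅ ∧ Set.BijOn f A Set.univ) ∨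
   (B ≠ ∅ ∧ (∀ x ∈ B, f x = ReesMatrix.theta) ∧
     (∀ x ∈ A \ B, f x ≠ ReesMatrix.theta) ∧
     Set.InjOn f (A \ B) ∧
     (∀ w : ReesMatrix H n' m' Q, w ≠ ReesMatrix.theta → ∃ x ∈ A \ B, f x = w)))

/-- `f` realises `A` as the completely simple Rees matrix semigroup
`M(H, n', m'; Q)` (without zero). -/
def IsReesFactorCS {S : Type*} [Semigroup S] (A : Set S)
    {H : Type*} [Group H] {n' m' : ℕ} (Q : Fin m' → Fin n' → H)
    (f : S → ReesMatrixCS H n' m' Q) : Prop :=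
  (∀ x ∈ A, ∀ y ∈ A, f (x * y) = f x * f y) ∧ Set.BijOn f A Set.univ

universe u

/-! ### Auxiliary machinery for the proof -/

instance WithOne.instFiniteAux {α : Type*} [Finite α] : Finite (WithOne α) := by
  have := Fintype.ofFinite α
  exact Finite.of_equiv (Option α) (Equiv.refl _)

section MalcevAux

variable {M : Type*} [Monoid M]

theorem malcev_succ (x y : M) (z : ℕ → M) (k : ℕ) :
    malcev x y z (k + 1) =
      ((malcev x y z k).1 * z (k + 1) * (malcev x y z k).2,
       (malcev x y z k).2 * z (k + 1) * (malcev x y z k).1) := rfl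

theorem malcev_add (x y : M) (z : ℕ → M) (s : ℕ) :
    ∀ t, malcev x y z (s + t) =
      malcev (malcev x y z s).1 (malcev x y z s).2 (fun j => z (s + j)) t
  | 0 => by simp [malcev]
  | t + 1 => by
      rw [← Nat.add_assoc, malcev_succ, malcev_add x y z s t, malcev_succ, Nat.add_assoc]

theorem malcev_congr (x y : M) {z z' : ℕ → M} :
    ∀ t, (∀ j, 1 ≤ j → j ≤ t → z j = z' j) → malcev x y z t = malcev x y z' t
  | 0, _ => rfl
  | t + 1, h => by
      rw [malcev_succ, malcev_succ,
        malcev_congr x y t (fun j h1 h2 => h j h1 (by omega)),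
        h (t + 1) (by omega) le_rfl]

theorem malcev_map {N : Type*} [Monoid N] (F : M →* N) (x y : M) (z : ℕ → M) :
    ∀ t, malcev (F x) (F y) (fun j => F (z j)) t =
      (F (malcev x y z t).1, F (malcev x y z t).2)
  | 0 => rfl
  | t + 1 => by
      rw [malcev_succ, malcev_succ, malcev_map F x y z t]
      simp [F.map_mul]

end MalcevAux

/-- If a surjective multiplicative map `f` from a finite semigroup collapses every
Mal'cev η-pair, then the target has no nontrivial Mal'cev η-pairs. -/
theorem noEta_of_mulHom {M N : Type*} [Semigroup M] [Semigroup N] [Finite M]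
    (f : M →ₙ* N) (hf : Function.Surjective f)
    (h : ∀ (a b : M) (k : ℕ), 1 < k → ∀ z : ℕ → WithOne M,
      (a : WithOne M) = (malcev (a : WithOne M) (b : WithOne M) z k).1 →
      (b : WithOne M) = (malcev (a : WithOne M) (b : WithOne M) z k).2 → f a = f b) :
    ∀ (x y : N) (k : ℕ), 1 < k → ∀ z : ℕ → WithOne N,
      (x : WithOne N) = (malcev (x : WithOne N) (y : WithOne N) z k).1 →
      (y : WithOne N) = (malcev (x : WithOne N) (y : WithOne N) z k).2 → x = y := by
  classical
  intro x y k hk z hx hy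
  set F : WithOne M →* WithOne N := WithOne.mapMulHom f with hFdef
  have hFs : Function.Surjective F := by
    intro w
    by_cases hw : w = 1
    · exact ⟨1, by simp [hw]⟩
    · obtain ⟨a, rfl⟩ := WithOne.ne_one_iff_exists.mp hw
      obtain ⟨b, rfl⟩ := hf a
      exact ⟨(b : WithOne M), WithOne.mapMulHom_coe f b⟩
  obtain ⟨x₀, hx₀⟩ := hf x
  obtain ⟨y₀, hy₀⟩ := hf y
  choose Z0 hZ0 using fun j => hFs (z j)
  set Zp : ℕ → WithOne M := fun t => Z0 ((t - 1) % k + 1) with hZp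
  set zp : ℕ → WithOne N := fun t => z ((t - 1) % k + 1) with hzp
  have hZper : ∀ (c j : ℕ), 1 ≤ j → j ≤ k → zp (k * c + j) = z j := by
    intro c j h1 h2
    have e1 : k * c + j - 1 = k * c + (j - 1) := by omega
    have e2 : (k * c + (j - 1)) % k = j - 1 := by
      rw [Nat.mul_add_mod]
      exact Nat.mod_eq_of_lt (by omega)
    simp only [hzp, e1, e2]
    congr 1
    omega
  -- the image sequence is constant
  have hconst : ∀ c, malcev (x : WithOne N) (y : WithOne N) zp (k * c) =
      ((x : WithOne N), (y : WithOne N)) := by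
    intro c
    induction c with
    | zero => simp [malcev]
    | succ c ih =>
        rw [Nat.mul_succ, malcev_add, ih]
        have : malcev (x : WithOne N) (y : WithOne N) (fun j => zp (k * c + j)) k =
            malcev (x : WithOne N) (y : WithOne N) z k :=
          malcev_congr _ _ k (fun j h1 h2 => hZper c j h1 h2)
        rw [this]
        exact Prod.ext hx.symm hy.symm
  -- pull back along F
  have hFZ : (fun t => F (Zp t)) = zp := by
    funext t
    simp only [hZp, hzp, hZ0]
  have hmap : ∀ c, F (malcev (x₀ : WithOne M) (y₀ : WithOne M) Zp (k * c)).1 = (x : WithOne N)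
      ∧ F (malcev (x₀ : WithOne M) (y₀ : WithOne M) Zp (k * c)).2 = (y : WithOne N) := by
    intro c
    have hm := malcev_map F (x₀ : WithOne M) (y₀ : WithOne M) Zp (k * c)
    have hc1 : F (x₀ : WithOne M) = (x : WithOne N) := by
      rw [WithOne.mapMulHom_coe, hx₀]
    have hc2 : F (y₀ : WithOne M) = (y : WithOne N) := by
      rw [WithOne.mapMulHom_coe, hy₀]
    rw [hc1, hc2, hFZ] at hm
    rw [hconst c] at hm
    exact ⟨(congrArg Prod.fst hm).symm, (congrArg Prod.snd hm).symm⟩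
  -- pigeonhole
  have key : ∀ i j : ℕ, i < j →
      malcev (x₀ : WithOne M) (y₀ : WithOne M) Zp (k * i)
        = malcev (x₀ : WithOne M) (y₀ : WithOne M) Zp (k * j) → x = y := by
    intro i j hij heq
    have hkj : k * j = k * i + k * (j - i) := by
      rw [← Nat.mul_add]
      congr 1
      omega
    have hdec := malcev_add (x₀ : WithOne M) (y₀ : WithOne M) Zp (k * i) (k * (j - i))
    rw [← hkj] at hdec
    have hfix := heq.trans hdec
    have hm1 := (hmap i).1
    have hm2 := (hmap i).2
    have h1 : (malcev (x₀ : WithOne M) (y₀ : WithOne M) Zp (k * i)).1 ≠ (1 : WithOne M) := by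
      intro hbad
      rw [hbad, F.map_one] at hm1
      exact WithOne.coe_ne_one hm1.symm
    have h2 : (malcev (x₀ : WithOne M) (y₀ : WithOne M) Zp (k * i)).2 ≠ (1 : WithOne M) := by
      intro hbad
      rw [hbad, F.map_one] at hm2
      exact WithOne.coe_ne_one hm2.symm
    obtain ⟨a, ha⟩ := WithOne.ne_one_iff_exists.mp h1
    obtain ⟨b, hb⟩ := WithOne.ne_one_iff_exists.mp h2
    have hfix1 := congrArg Prod.fst hfix
    have hfix2 := congrArg Prod.snd hfix
    rw [← ha, ← hb] at hfix1 hfix2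
    have hk2 : 1 < k * (j - i) :=
      lt_of_lt_of_le hk (Nat.le_mul_of_pos_right k (by omega))
    have hfab := h a b (k * (j - i)) hk2 (fun t => Zp (k * i + t)) hfix1 hfix2
    rw [← ha] at hm1
    rw [← hb] at hm2
    rw [WithOne.mapMulHom_coe] at hm1 hm2
    have hxa : x = f a := WithOne.coe_inj.mp hm1.symm
    have hyb : y = f b := WithOne.coe_inj.mp hm2.symm
    rw [hxa, hyb, hfab]
  obtain ⟨i, j, hij, heq⟩ := Finite.exists_ne_map_eq_of_infinite
    (fun c => malcev (x₀ : WithOne M) (y₀ : WithOne M) Zp (k * c))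
  rcases hij.lt_or_gt with hlt | hlt
  · exact key i j hlt heq
  · exact key j i hlt heq.symm

/-- Any η-pair generates a relation in `η*`. -/
theorem etaStar_of_pair {S : Type*} [Semigroup S] {a b : S} {k : ℕ} (hk : 1 < k)
    (z : ℕ → WithOne S)
    (h1 : (a : WithOne S) = (malcev (a : WithOne S) (b : WithOne S) z k).1)
    (h2 : (b : WithOne S) = (malcev (a : WithOne S) (b : WithOne S) z k).2) :
    etaStar S a b := by
  have hEta : eta S a b :=
    Relation.TransGen.single ⟨k, by omega, Or.inr ⟨hk, z, h1, h2⟩⟩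
  exact ConGen.Rel.of _ _ hEta

/-- Idempotents `e, f` with `ef = e` and `fe = f` are η₂-related, hence η*-related. -/
theorem etaStar_idem₁ {S : Type*} [Semigroup S] {e f : S} (hee : e * e = e)
    (hff : f * f = f) (hef : e * f = e) (hfe : f * e = f) : etaStar S e f := by
  have l1 : e * f * f = e := by rw [hef, hef]
  have r1 : f * f * e = f := by rw [hff, hfe]
  refine etaStar_of_pair (k := 2) one_lt_two (fun _ => (f : WithOne S)) ?_ ?_
  · show (e : WithOne S) =
      (e : WithOne S) * (f : WithOne S) * (f : WithOne S) * (f : WithOne S) *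
        ((f : WithOne S) * (f : WithOne S) * (e : WithOne S))
    simp only [← WithOne.coe_mul, WithOne.coe_inj]
    rw [l1, r1, l1]
  · show (f : WithOne S) =
      (f : WithOne S) * (f : WithOne S) * (e : WithOne S) * (f : WithOne S) *
        ((e : WithOne S) * (f : WithOne S) * (f : WithOne S))
    simp only [← WithOne.coe_mul, WithOne.coe_inj]
    rw [r1, l1, r1]

/-- Idempotents `e, f` with `ef = f` and `fe = e` are η₂-related, hence η*-related. -/
theorem etaStar_idem₂ {S : Type*} [Semigroup S] {e f : S} (hee : e * e = e)
    (hff : f * f = f) (hef : e * f = f) (hfe : f * e = e) : etaStar S e f := by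
  have l2 : e * e * f = f := by rw [hee, hef]
  have r2 : f * e * e = e := by rw [hfe, hee]
  refine etaStar_of_pair (k := 2) one_lt_two (fun _ => (e : WithOne S)) ?_ ?_
  · show (e : WithOne S) =
      (e : WithOne S) * (e : WithOne S) * (f : WithOne S) * (e : WithOne S) *
        ((f : WithOne S) * (e : WithOne S) * (e : WithOne S))
    simp only [← WithOne.coe_mul, WithOne.coe_inj]
    rw [l2, r2, r2]
  · show (f : WithOne S) =
      (f : WithOne S) * (e : WithOne S) * (e : WithOne S) * (e : WithOne S) *
        ((e : WithOne S) * (e : WithOne S) * (f : WithOne S))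
    simp only [← WithOne.coe_mul, WithOne.coe_inj]
    rw [r2, l2, l2]

/-- A finite group with no nontrivial Mal'cev η-pairs is nilpotent. -/
theorem isNilpotent_of_noEta :
    ∀ (c : ℕ) (K : Type u) [Group K] [Finite K], Nat.card K = c →
    (∀ (a b : K) (k : ℕ), 1 < k → ∀ z : ℕ → WithOne K,
      (a : WithOne K) = (malcev (a : WithOne K) (b : WithOne K) z k).1 →
      (b : WithOne K) = (malcev (a : WithOne K) (b : WithOne K) z k).2 → a = b) →
    Group.IsNilpotent K := by
  intro c
  induction c using Nat.strong_induction_on with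
  | _ c IH =>
    intro K _ _ hc h
    classical
    rcases subsingleton_or_nontrivial K with hs | hnt
    · infer_instance
    by_cases hZ : Subgroup.center K = ⊥
    · -- centerless nontrivial: build an explicit η-cycle, contradiction
      exfalso
      obtain ⟨x1, hx1⟩ := exists_ne (1 : K)
      have key : ∀ p : {q : K × K // q.1 ≠ q.2}, ∃ q : {q : K × K // q.1 ≠ q.2},
          ∃ zz : K, q.1.1 = p.1.1 * zz * p.1.2 ∧ q.1.2 = p.1.2 * zz * p.1.1 := by
        rintro ⟨⟨u, v⟩, huv⟩
        have hδ : u * v⁻¹ ≠ 1 := by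
          intro hbad
          exact huv (by
            have := congrArg (fun t => t * v) hbad
            simpa [mul_assoc] using this)
        have hδc : u * v⁻¹ ∉ Subgroup.center K := by
          rw [hZ]
          simpa using hδ
        have hex : ∃ w : K, ¬ w * (u * v⁻¹) = (u * v⁻¹) * w := by
          by_contra hcon
          push_neg at hcon
          exact hδc (Subgroup.mem_center_iff.mpr hcon)
        obtain ⟨w, hw⟩ := hex
        refine ⟨⟨(u * (u⁻¹ * w) * v, v * (u⁻¹ * w) * u), ?_⟩, u⁻¹ * w, rfl, rfl⟩
        intro heq
        apply hw
        have h2 : w * v = v * (u⁻¹ * (w * u)) := by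
          have := heq
          simpa [mul_inv_cancel_left, mul_assoc] using this
        have h3 := congrArg (fun t => t * u⁻¹) h2
        have h4 : w * (v * u⁻¹) = v * (u⁻¹ * w) := by
          simpa [mul_assoc] using h3
        have hcomm : Commute w (v * u⁻¹) := by
          show w * (v * u⁻¹) = (v * u⁻¹) * w
          rw [h4, mul_assoc]
        have hcomm2 : Commute w (u * v⁻¹) := by
          have := hcomm.inv_right
          simpa [mul_inv_rev] using this
        exact hcomm2.eq
      choose stepF zF hz1 hz2 using key
      set pt0 : {q : K × K // q.1 ≠ q.2} := ⟨(x1, 1), hx1⟩ with hpt0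
      obtain ⟨i, j, hij, heq⟩ := Finite.exists_ne_map_eq_of_infinite (fun t => stepF^[t] pt0)
      have key2 : ∀ i j : ℕ, i < j → stepF^[i] pt0 = stepF^[j] pt0 → False := by
        intro i j hij heq
        set pt := stepF^[i] pt0 with hptdef
        set p := j - i with hpdef
        have hp1 : 1 ≤ p := by omega
        have hper : stepF^[p] pt = pt := by
          rw [hptdef, ← Function.iterate_add_apply, hpdef]
          rw [show j - i + i = j by omega]
          exact heq.symm
        have hperk : ∀ t, stepF^[p * t] pt = pt := by
          intro t
          induction t with
          | zero => rfl
          | succ t ih =>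
              rw [Nat.mul_succ, Function.iterate_add_apply, hper, ih]
        have hmod : ∀ t, stepF^[t] pt = stepF^[t % p] pt := by
          intro t
          conv_lhs => rw [← Nat.mod_add_div t p]
          rw [Function.iterate_add_apply, hperk (t / p)]
        set zs : ℕ → K := fun t => zF (stepF^[(t - 1) % p] pt) with hzs
        have bridge : ∀ t, malcev ((pt.1.1 : K) : WithOne K) ((pt.1.2 : K) : WithOne K)
            (fun s => ((zs s : K) : WithOne K)) t
            = (((stepF^[t] pt).1.1 : WithOne K), ((stepF^[t] pt).1.2 : WithOne K)) := by
          intro t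
          induction t with
          | zero => rfl
          | succ t ih =>
              rw [malcev_succ, ih]
              have hzz : zs (t + 1) = zF (stepF^[t] pt) := by
                rw [hzs]
                simp only
                rw [show t + 1 - 1 = t from rfl, ← hmod t]
              rw [Function.iterate_succ_apply' stepF t pt]
              rw [hz1 (stepF^[t] pt), hz2 (stepF^[t] pt), hzz]
              simp [← WithOne.coe_mul]
        have hfix := bridge (2 * p)
        rw [show stepF^[2 * p] pt = pt from by rw [show 2 * p = p * 2 by ring]; exact hperk 2]
          at hfix
        have hcontra := h pt.1.1 pt.1.2 (2 * p) (by omega)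
          (fun s => ((zs s : K) : WithOne K))
          (congrArg Prod.fst hfix).symm (congrArg Prod.snd hfix).symm
        exact pt.2 hcontra
      rcases hij.lt_or_gt with hlt | hlt
      · exact key2 i j hlt heq
      · exact key2 j i hlt heq.symm
    · -- nontrivial center: pass to the central quotient
      have hlt : Nat.card (K ⧸ Subgroup.center K) < c := by
        rw [← hc]
        have h1 := Subgroup.card_eq_card_quotient_mul_card_subgroup (Subgroup.center K)
        have h2 : 1 < Nat.card (Subgroup.center K) :=
          (Subgroup.one_lt_card_iff_ne_bot _).mpr hZ
        have h3 : 0 < Nat.card (K ⧸ Subgroup.center K) := Nat.card_pos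
        calc Nat.card (K ⧸ Subgroup.center K)
            < Nat.card (K ⧸ Subgroup.center K) * Nat.card (Subgroup.center K) := by
              exact (Nat.lt_mul_iff_one_lt_right h3).mpr h2
          _ = Nat.card K := h1.symm
      have hq : ∀ (a b : K ⧸ Subgroup.center K) (k : ℕ), 1 < k →
          ∀ z : ℕ → WithOne (K ⧸ Subgroup.center K),
          (a : WithOne _) = (malcev (a : WithOne _) (b : WithOne _) z k).1 →
          (b : WithOne _) = (malcev (a : WithOne _) (b : WithOne _) z k).2 → a = b := by
        apply noEta_of_mulHom (QuotientGroup.mk' (Subgroup.center K)).toMulHom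
          (QuotientGroup.mk'_surjective _)
        intro a b k hk z h1 h2
        rw [h a b k hk z h1 h2]
      have := IH _ hlt (K ⧸ Subgroup.center K) rfl hq
      exact of_quotient_center_nilpotent this

/-- If `M = M(G,n,m;P)` is a finite completely simple Rees matrix
semigroup (without zero) over a finite group `G`, then `M/η*` is a finite
nilpotent group. -/
theorem quotient_etaStar_completelySimple (G : Type*) [Group G] [Finite G]
    (n m : ℕ) (hn : 0 < n) (hm : 0 < m) (P : Fin m → Fin n → G) :
    ∃ (H : Type) (_ : Group H) (_ : Finite H), Group.IsNilpotent H ∧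
      Nonempty ((etaStar (ReesMatrixCS G n m P)).Quotient ≃* H) := by

  classical
  set i0 : Fin n := ⟨0, hn⟩ with hi0
  set j0 : Fin m := ⟨0, hm⟩ with hj0
  set C : Con (ReesMatrixCS G n m P) := etaStar (ReesMatrixCS G n m P) with hCdef
  have elem_mul : ∀ (g h : G) (i k : Fin n) (j l : Fin m),
      (ReesMatrixCS.elem g i j : ReesMatrixCS G n m P) * ReesMatrixCS.elem h k l
        = ReesMatrixCS.elem (g * P j k * h) i l := fun _ _ _ _ _ _ => rfl
  set E : Fin n → Fin m → ReesMatrixCS G n m P :=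
    fun i j => ReesMatrixCS.elem (P j i)⁻¹ i j with hEdef
  have hEE : ∀ i j, E i j * E i j = E i j := by
    intro i j
    rw [hEdef]
    simp only
    rw [elem_mul]
    simp
  have hRow : ∀ (i : Fin n) (j j' : Fin m), E i j * E i j' = E i j' := by
    intro i j j'
    rw [hEdef]
    simp only
    rw [elem_mul]
    simp
  have hCol : ∀ (i k : Fin n) (j : Fin m), E i j * E k j = E i j := by
    intro i k j
    rw [hEdef]
    simp only
    rw [elem_mul]
    simp [mul_assoc]
  have hidem : ∀ i j, C (E i j) (E i0 j0) := by
    intro i j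
    have h1 : C (E i j) (E i j0) :=
      etaStar_idem₂ (hEE i j) (hEE i j0) (hRow i j j0) (hRow i j0 j)
    have h2 : C (E i j0) (E i0 j0) :=
      etaStar_idem₁ (hEE i j0) (hEE i0 j0) (hCol i i0 j0) (hCol i0 i j0)
    exact C.trans h1 h2
  have hsurj : ∀ q : C.Quotient, ∃ x : ReesMatrixCS G n m P, (x : C.Quotient) = q :=
    fun q => Con.induction_on q fun x => ⟨x, rfl⟩
  have hone : ∀ q : C.Quotient, ((E i0 j0 : ReesMatrixCS G n m P) : C.Quotient) * q = q := by
    intro q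
    obtain ⟨x, rfl⟩ := hsurj q
    obtain ⟨g, i, j⟩ := x
    have h1 : ((E i j0 : ReesMatrixCS G n m P) : C.Quotient)
        = ((E i0 j0 : ReesMatrixCS G n m P) : C.Quotient) := (Con.eq C).mpr (hidem i j0)
    rw [← h1, ← Con.coe_mul]
    have h2 : E i j0 * ReesMatrixCS.elem g i j = ReesMatrixCS.elem g i j := by
      rw [hEdef]
      simp only
      rw [elem_mul]
      simp
    rw [h2]
  have hinv : ∀ q : C.Quotient, ∃ y : C.Quotient,
      y * q = ((E i0 j0 : ReesMatrixCS G n m P) : C.Quotient) := by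
    intro q
    obtain ⟨x, rfl⟩ := hsurj q
    obtain ⟨g, i, j⟩ := x
    refine ⟨((ReesMatrixCS.elem ((P j i0)⁻¹ * g⁻¹ * (P j0 i)⁻¹) i0 j0 :
      ReesMatrixCS G n m P) : C.Quotient), ?_⟩
    rw [← Con.coe_mul]
    have h2 : (ReesMatrixCS.elem ((P j i0)⁻¹ * g⁻¹ * (P j0 i)⁻¹) i0 j0 :
        ReesMatrixCS G n m P) * ReesMatrixCS.elem g i j = E i0 j := by
      rw [elem_mul, hEdef]
      simp [mul_assoc]
    rw [h2]
    exact (Con.eq C).mpr (hidem i0 j)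
  letI : One C.Quotient := ⟨((E i0 j0 : ReesMatrixCS G n m P) : C.Quotient)⟩
  letI : Inv C.Quotient := ⟨fun q => (hinv q).choose⟩
  letI grpQ : Group C.Quotient :=
    Group.ofLeftAxioms mul_assoc hone (fun q => (hinv q).choose_spec)
  haveI finQ : Finite C.Quotient := Quotient.finite _
  have hQno := noEta_of_mulHom (M := ReesMatrixCS G n m P) (N := C.Quotient)
    ⟨fun x => (x : C.Quotient), fun a b => Con.coe_mul a b⟩
    (fun q => Con.induction_on q fun x => ⟨x, rfl⟩)
    (fun a b k hk z h1 h2 => (Con.eq C).mpr (etaStar_of_pair hk z h1 h2))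
  haveI nilQ : Group.IsNilpotent C.Quotient :=
    isNilpotent_of_noEta (Nat.card C.Quotient) C.Quotient rfl hQno
  set e := Finite.equivFin C.Quotient with hedef
  letI : Mul (Fin (Nat.card C.Quotient)) := ⟨fun a b => e (e.symm a * e.symm b)⟩
  letI : One (Fin (Nat.card C.Quotient)) := ⟨e 1⟩
  letI : Inv (Fin (Nat.card C.Quotient)) := ⟨fun a => e (e.symm a)⁻¹⟩
  letI grpH : Group (Fin (Nat.card C.Quotient)) := Group.ofLeftAxioms
    (by intro a b c
        show e (e.symm (e (e.symm a * e.symm b)) * e.symm c)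
            = e (e.symm a * e.symm (e (e.symm b * e.symm c)))
        rw [Equiv.symm_apply_apply, Equiv.symm_apply_apply, mul_assoc])
    (by intro a
        show e (e.symm (e 1) * e.symm a) = a
        rw [Equiv.symm_apply_apply, one_mul, Equiv.apply_symm_apply])
    (by intro a
        show e (e.symm (e (e.symm a)⁻¹) * e.symm a) = e 1
        rw [Equiv.symm_apply_apply, inv_mul_cancel])
  have isoQH : C.Quotient ≃* Fin (Nat.card C.Quotient) := by
    refine { e with map_mul' := ?_ }
    intro a b
    show e (a * b) = e (e.symm (e a) * e.symm (e b))
    rw [Equiv.symm_apply_apply, Equiv.symm_apply_apply]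
  haveI nilH : Group.IsNilpotent (Fin (Nat.card C.Quotient)) :=
    nilpotent_of_surjective isoQH.toMonoidHom isoQH.surjective
  exact ⟨Fin (Nat.card C.Quotient), grpH, inferInstance, nilH, ⟨isoQH⟩⟩
end

section
/- Let S be a finite semigroup. Then S/η* is a block group all of whose subgroups are nilpotent: every element of S/η* has at most one inverse, and every subsemigroup of S/η* which is a group is a nilpotent group. -/
section MalcevAux

open Classical

theorem malcev_map_s11 {M N : Type*} [Monoid M] [Monoid N] (f : M → N)
    (hf : ∀ a b : M, f (a * b) = f a * f b) (a b : M) (z : ℕ → M) :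
    ∀ k, malcev (f a) (f b) (fun i => f (z i)) k =
      (f (malcev a b z k).1, f (malcev a b z k).2)
  | 0 => rfl
  | k + 1 => by
      simp [malcev, malcev_map_s11 f hf a b z k, hf]

theorem malcev_congr_s11 {M : Type*} [Monoid M] (a b : M) (z z' : ℕ → M) :
    ∀ k, (∀ i, 1 ≤ i → i ≤ k → z i = z' i) → malcev a b z k = malcev a b z' k
  | 0, _ => rfl
  | k + 1, h => by
      have ih := malcev_congr_s11 a b z z' k fun i h1 h2 => h i h1 (h2.trans (Nat.le_succ k))
      simp [malcev, ih, h (k + 1) (Nat.succ_le_succ (Nat.zero_le k)) le_rfl]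

theorem malcev_add_s11 {M : Type*} [Monoid M] (a b : M) (z : ℕ → M) (m : ℕ) (j : ℕ) :
    malcev a b z (m + j) =
      malcev (malcev a b z m).1 (malcev a b z m).2 (fun i => z (m + i)) j := by
  induction j with
  | zero => rfl
  | succ j ih =>
      rw [show m + (j + 1) = (m + j) + 1 from rfl]
      simp only [malcev]
      rw [ih]
      rfl

theorem malcev_coe {S : Type*} [Semigroup S] (a b : S) (z : ℕ → WithOne S) :
    ∀ k, ∃ s t : S, malcev (a : WithOne S) (b : WithOne S) z k = (↑s, ↑t)
  | 0 => ⟨a, b, rfl⟩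
  | k + 1 => by
      obtain ⟨s, t, h⟩ := malcev_coe a b z (k)
      have hmul : ∀ u : WithOne S, ∃ v w : S,
          (↑s : WithOne S) * u * ↑t = ↑v ∧ (↑t : WithOne S) * u * ↑s = ↑w := by
        intro u
        refine WithOne.cases_on u ⟨s * t, t * s, by simp, by simp⟩ fun c =>
          ⟨s * c * t, t * c * s, by simp [← WithOne.coe_mul], by simp [← WithOne.coe_mul]⟩
      obtain ⟨v, w, hv, hw⟩ := hmul (z (k + 1))
      exact ⟨v, w, by simp [malcev, h, hv, hw]⟩

/-- Key lemma: the relation `η_n` on the quotient `S/η*` of a finite semigroup is trivial. -/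
theorem etaN_quotient_trivial {S : Type*} [Semigroup S] [Finite S]
    {n : ℕ} {x y : (etaStar S).Quotient} (h : etaN _ n x y) : x = y := by
  rcases h with ⟨-, rfl⟩ | ⟨hn, zq, hx, hy⟩
  · rfl
  obtain ⟨x0, hx0⟩ := Quotient.exists_rep x
  obtain ⟨y0, hy0⟩ := Quotient.exists_rep y
  -- the canonical multiplicative maps
  set π : S →ₙ* (etaStar S).Quotient :=
    ⟨fun s => (s : (etaStar S).Quotient), fun a b => Con.coe_mul _ _⟩ with hπ
  set Ψ := WithOne.mapMulHom π with hΨ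
  have hΨsurj : ∀ u : WithOne (etaStar S).Quotient, ∃ w : WithOne S, Ψ w = u := by
    intro u
    refine WithOne.cases_on u ⟨1, map_one Ψ⟩ fun q => ?_
    obtain ⟨s, hs⟩ := Quotient.exists_rep q
    exact ⟨(s : WithOne S), by rw [WithOne.mapMulHom_coe]; exact congrArg _ hs⟩
  -- lift the sandwich sequence
  choose zl hzl using fun i => hΨsurj (zq i)
  -- the one-block step on pairs of representatives
  have hstep : ∀ p : S × S, ∃ q : S × S,
      malcev (↑p.1 : WithOne S) ↑p.2 zl n = (↑q.1, ↑q.2) := by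
    intro p
    obtain ⟨s, t, hst⟩ := malcev_coe p.1 p.2 zl n
    exact ⟨(s, t), hst⟩
  choose F hF using hstep
  set A : ℕ → S × S := fun t => F^[t] (x0, y0) with hA
  -- each iterate stays in the classes of x and y
  have hΨcoe : ∀ s : S, Ψ (s : WithOne S) = ((s : (etaStar S).Quotient) : WithOne (etaStar S).Quotient) :=
    fun s => WithOne.mapMulHom_coe π s
  have hinv : ∀ t, ((A t).1 : (etaStar S).Quotient) = x ∧ ((A t).2 : (etaStar S).Quotient) = y := by
    intro t
    induction t with
    | zero => exact ⟨hx0, hy0⟩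
    | succ t ih =>
        have hit : A (t + 1) = F (A t) := by
          simp only [hA]; exact Function.iterate_succ_apply' _ _ _
        have hmap := malcev_map_s11 Ψ (map_mul Ψ) (↑(A t).1 : WithOne S) ↑(A t).2 zl n
        have hzfun : (fun i => Ψ (zl i)) = zq := funext hzl
        rw [hzfun, hΨcoe, hΨcoe, ih.1, ih.2, hF (A t)] at hmap
        have h1 : (↑x : WithOne (etaStar S).Quotient) = Ψ (↑(F (A t)).1) := by
          rw [hx]; rw [hmap]
        have h2 : (↑y : WithOne (etaStar S).Quotient) = Ψ (↑(F (A t)).2) := by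
          rw [hy]; rw [hmap]
        rw [hΨcoe] at h1 h2
        rw [hit]
        exact ⟨(WithOne.coe_inj.mp h1).symm, (WithOne.coe_inj.mp h2).symm⟩
  -- pigeonhole
  obtain ⟨i, j, hij, hAij⟩ := Finite.exists_ne_map_eq_of_infinite A
  obtain ⟨p, q, hpq, hApq⟩ : ∃ p q, p < q ∧ A p = A q := by
    rcases hij.lt_or_gt with h | h
    exacts [⟨i, j, h, hAij⟩, ⟨j, i, h, hAij.symm⟩]
  -- periodic sandwich sequence
  have hn2 : 2 ≤ n := hn
  set Z : ℕ → WithOne S := fun j => zl ((j - 1) % n + 1) with hZdef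
  have hblock : ∀ t, malcev (↑(A p).1 : WithOne S) ↑(A p).2 Z (n * t)
      = (↑(A (p + t)).1, ↑(A (p + t)).2) := by
    intro t
    induction t with
    | zero => rfl
    | succ t ih =>
        rw [Nat.mul_succ, malcev_add_s11, ih]
        have hagree : ∀ i, 1 ≤ i → i ≤ n → Z (n * t + i) = zl i := by
          intro i h1 h2
          have h3 : n * t + i - 1 = (i - 1) + n * t := by omega
          have h4 : (i - 1) % n = i - 1 := Nat.mod_eq_of_lt (by omega)
          have h5 : (i - 1) + 1 = i := by omega
          simp only [hZdef, h3, Nat.add_mul_mod_self_left, h4, h5]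
        rw [malcev_congr_s11 _ _ _ _ n hagree, hF (A (p + t))]
        have hit : A ((p + t) + 1) = F (A (p + t)) := by
          simp only [hA]; exact Function.iterate_succ_apply' _ _ _
        rw [show p + (t + 1) = (p + t) + 1 from rfl, hit]
  -- the fixed pair gives an η_N relation in S
  set a := (A p).1
  set b := (A p).2
  have hfix : malcev (↑a : WithOne S) ↑b Z (n * (q - p)) = (↑a, ↑b) := by
    have := hblock (q - p)
    rw [show p + (q - p) = q from by omega, ← hApq] at this
    exact this
  have hN : 1 < n * (q - p) := by
    have : 1 ≤ q - p := by omega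
    nlinarith
  have hetaN : etaN S (n * (q - p)) a b :=
    Or.inr ⟨hN, Z, (congrArg Prod.fst hfix).symm, (congrArg Prod.snd hfix).symm⟩
  have heta : eta S a b := Relation.TransGen.single ⟨n * (q - p), by omega, hetaN⟩
  have hcon : etaStar S a b := ConGen.Rel.of _ _ heta
  calc x = (a : (etaStar S).Quotient) := ((hinv p).1).symm
    _ = (b : (etaStar S).Quotient) := (Con.eq _).mpr hcon
    _ = y := (hinv p).2

end MalcevAux

/-- For a finite semigroup `S`, the quotient `S/η*` is a block
group (every element has at most one inverse) and every subsemigroup of `S/η*`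
which is a group is a nilpotent group. -/
theorem quotient_etaStar_blockGroup_nilpotentSubgroups
    (S : Type*) [Semigroup S] [Finite S] :
    (∀ x y y' : (etaStar S).Quotient,
      (x * y * x = x ∧ y * x * y = y) →
      (x * y' * x = x ∧ y' * x * y' = y') → y = y') ∧
    (∀ (H : Type*) [Group H] (f : H →ₙ* (etaStar S).Quotient),
      Function.Injective f → Group.IsNilpotent H) := by
  have key : ∀ e f : (etaStar S).Quotient,
      e * f * (f * e) = e → f * e * (e * f) = f → e = f := by
    intro e f h5 h6
    apply etaN_quotient_trivial (S := S) (n := 2)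
    refine Or.inr ⟨one_lt_two, fun _ => 1, ?_, ?_⟩
    · show (↑e : WithOne (etaStar S).Quotient) = ↑e * 1 * ↑f * 1 * (↑f * 1 * ↑e)
      simp only [mul_one, ← WithOne.coe_mul, h5]
    · show (↑f : WithOne (etaStar S).Quotient) = ↑f * 1 * ↑e * 1 * (↑e * 1 * ↑f)
      simp only [mul_one, ← WithOne.coe_mul, h6]
  constructor
  · rintro x y y' ⟨h1, h2⟩ ⟨h3, h4⟩
    have hef : (x * y) * (x * y') = x * y' := by rw [← mul_assoc, h1]
    have hfe : (x * y') * (x * y) = x * y := by rw [← mul_assoc, h3]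
    have hg1 : (y * x) * (y' * x) = y * x := by
      rw [mul_assoc, ← mul_assoc x y' x, h3]
    have hg2 : (y' * x) * (y * x) = y' * x := by
      rw [mul_assoc, ← mul_assoc x y x, h1]
    have hxy : x * y = x * y' := key (x * y) (x * y') (by rw [hef, hfe, hfe]) (by rw [hfe, hef, hef])
    have hyx : y * x = y' * x := key (y * x) (y' * x) (by rw [hg1, hg2, hg1]) (by rw [hg2, hg1, hg2])
    calc y = y * x * y := h2.symm
      _ = y' * x * y := by rw [hyx]
      _ = y' * (x * y) := by rw [mul_assoc]
      _ = y' * (x * y') := by rw [hxy]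
      _ = y' * x * y' := by rw [← mul_assoc]
      _ = y' := h4
  · intro H _ f hf
    classical
    have hQfin : Finite (etaStar S).Quotient :=
      Finite.of_surjective (fun s : S => (s : (etaStar S).Quotient))
        fun q => Quotient.exists_rep q
    have hHfin : Finite H := Finite.of_injective f hf
    by_contra hnil
    have hSubFin : Finite (Subgroup H) :=
      Finite.of_injective (fun K : Subgroup H => (K : Set H)) SetLike.coe_injective
    obtain ⟨k, l, hkl, hZkl⟩ := Finite.exists_ne_map_eq_of_infinite (upperCentralSeries H)
    have hmono := upperCentralSeries_mono (G := H)
    obtain ⟨N, hNs⟩ : ∃ N, upperCentralSeries H (N + 1) = upperCentralSeries H N := by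
      rcases hkl.lt_or_gt with h | h
      · exact ⟨k, le_antisymm (le_trans (hmono (show k + 1 ≤ l by omega)) hZkl.ge)
          (hmono (Nat.le_succ k))⟩
      · exact ⟨l, le_antisymm (le_trans (hmono (show l + 1 ≤ k by omega)) hZkl.le)
          (hmono (Nat.le_succ l))⟩
    have hne : upperCentralSeries H N ≠ ⊤ := fun htop => hnil ⟨⟨N, htop⟩⟩
    obtain ⟨v0, hv0⟩ : ∃ v, v ∉ upperCentralSeries H N := by
      by_contra hall
      push_neg at hall
      exact hne ((Subgroup.eq_top_iff' _).mpr hall)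
    have hstepH : ∀ c : H, c ∉ upperCentralSeries H N →
        ∃ w, w * c⁻¹ * w⁻¹ * c ∉ upperCentralSeries H N := by
      intro c hc
      by_contra hallw
      push_neg at hallw
      apply hc
      have hcinv : c⁻¹ ∈ upperCentralSeries H (N + 1) := by
        refine mem_upperCentralSeries_succ_iff.mpr ?_
        intro w
        have h2 := (upperCentralSeries H N).inv_mem (hallw w)
        have h3 : (w * c⁻¹ * w⁻¹ * c)⁻¹ = c⁻¹ * w * (c⁻¹)⁻¹ * w⁻¹ := by group
        rwa [h3] at h2
      rw [hNs] at hcinv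
      exact (upperCentralSeries H N).inv_mem_iff.mp hcinv
    set wp : H → H := fun c =>
      if h : ∃ w, w * c⁻¹ * w⁻¹ * c ∉ upperCentralSeries H N then h.choose else 1 with hwpdef
    have hwp : ∀ c, c ∉ upperCentralSeries H N →
        wp c * c⁻¹ * (wp c)⁻¹ * c ∉ upperCentralSeries H N := by
      intro c hc
      have h := hstepH c hc
      simp only [hwpdef, dif_pos h]
      exact h.choose_spec
    obtain ⟨L, hL0, hLsucc⟩ : ∃ L : ℕ → H × H, L 0 = (v0, 1) ∧ ∀ k,
        L (k + 1) = ((L k).1 * ((L k).1⁻¹ * wp ((L k).1 * (L k).2⁻¹)) * (L k).2,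
          (L k).2 * ((L k).1⁻¹ * wp ((L k).1 * (L k).2⁻¹)) * (L k).1) :=
      ⟨fun k => (fun p : H × H =>
          (p.1 * (p.1⁻¹ * wp (p.1 * p.2⁻¹)) * p.2,
           p.2 * (p.1⁻¹ * wp (p.1 * p.2⁻¹)) * p.1))^[k] (v0, 1),
        rfl, fun k => Function.iterate_succ_apply' _ _ _⟩
    set z : ℕ → H := fun j => match j with
      | 0 => 1
      | Nat.succ k => (L k).1⁻¹ * wp ((L k).1 * (L k).2⁻¹) with hzdef
    have hz : ∀ k, z (k + 1) = (L k).1⁻¹ * wp ((L k).1 * (L k).2⁻¹) := fun k => rfl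
    have hLmal : ∀ k, malcev v0 (1 : H) z k = L k := by
      intro k
      induction k with
      | zero => rw [hL0]; rfl
      | succ k ih =>
          simp only [malcev]
          rw [ih, hz, hLsucc]
    have hvL : ∀ k, (L k).1 * (L k).2⁻¹ ∉ upperCentralSeries H N := by
      intro k
      induction k with
      | zero => rw [hL0]; simpa using hv0
      | succ k ih =>
          have hw := hwp _ ih
          have hgr : ((L k).1 * ((L k).1⁻¹ * wp ((L k).1 * (L k).2⁻¹)) * (L k).2) *
              ((L k).2 * ((L k).1⁻¹ * wp ((L k).1 * (L k).2⁻¹)) * (L k).1)⁻¹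
              = wp ((L k).1 * (L k).2⁻¹) * ((L k).1 * (L k).2⁻¹)⁻¹ *
                (wp ((L k).1 * (L k).2⁻¹))⁻¹ * ((L k).1 * (L k).2⁻¹) := by
            group
          rw [hLsucc k]
          dsimp only
          rw [hgr]
          exact hw
    obtain ⟨i, j, hij, hLij⟩ := Finite.exists_ne_map_eq_of_infinite (fun k => L (2 * k))
    obtain ⟨p, q, hpq2, hLpq⟩ : ∃ p q, p + 2 ≤ q ∧ L p = L q := by
      rcases hij.lt_or_gt with h | h
      · exact ⟨2 * i, 2 * j, by omega, hLij⟩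
      · exact ⟨2 * j, 2 * i, by omega, hLij.symm⟩
    have hper : malcev (L p).1 (L p).2 (fun i => z (p + i)) (q - p)
        = ((L p).1, (L p).2) := by
      have h1 := malcev_add_s11 v0 (1 : H) z p (q - p)
      rw [show p + (q - p) = q from by omega] at h1
      rw [hLmal p, hLmal q] at h1
      exact h1.symm.trans hLpq.symm
    set φ : H → WithOne (etaStar S).Quotient := fun h =>
      ((f h : (etaStar S).Quotient) : WithOne (etaStar S).Quotient) with hφdef
    have hφ : ∀ a b : H, φ (a * b) = φ a * φ b := by
      intro a b
      simp only [hφdef, map_mul, WithOne.coe_mul]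
    have hmapped := malcev_map_s11 φ hφ (L p).1 (L p).2 (fun i => z (p + i)) (q - p)
    rw [hper] at hmapped
    have hQeq : f (L p).1 = f (L p).2 := by
      apply etaN_quotient_trivial (S := S) (n := q - p)
      refine Or.inr ⟨by omega, fun i => φ (z (p + i)), ?_, ?_⟩
      · exact (congrArg Prod.fst hmapped).symm
      · exact (congrArg Prod.snd hmapped).symm
    have heq : (L p).1 = (L p).2 := hf hQeq
    refine hvL p ?_
    rw [heq]
    simpa using Subgroup.one_mem (upperCentralSeries H N)
end
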